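/- For m ≥ 3, the number of binary strings of length m that end in "100" and contain the substring "100" only in that final position equals F(m) - 1, where F is the Fibonacci sequence with F(0)=0, F(1)=1. -/

import Mathlib

def Av (n : ℕ) (s : Fin n → Bool) : Prop :=
  ∀ i : ℕ, ∀ h : i + 2 < n,
    ¬(s ⟨i, by have _ := s; omega⟩ = true ∧ s ⟨i+1, by have _ := s; omega⟩ = false ∧ s ⟨i+2, h⟩ = false)

noncomputable def a (n : ℕ) : ℕ := Nat.card {s : Fin n → Bool // Av n s}

lemma cons_mk_succ {n : ℕ} (c : Bool) (t : Fin n → Bool) (j : ℕ) (h : j + 1 < n + 1) :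
    (Fin.cons c t : Fin (n+1) → Bool) ⟨j+1, h⟩ = t ⟨j, by omega⟩ := rfl

lemma cons_mk_zero {n : ℕ} (c : Bool) (t : Fin n → Bool) (h : 0 < n + 1) :
    (Fin.cons c t : Fin (n+1) → Bool) ⟨0, h⟩ = c := rfl

lemma av_cons_false {n : ℕ} (t : Fin n → Bool) :
    Av (n+1) (Fin.cons false t) ↔ Av n t := by
  constructor
  · intro H i h hc
    exact H (i+1) (by omega) ⟨hc.1, hc.2.1, hc.2.2⟩
  · intro H i h hc
    match i with
    | 0 => exact absurd hc.1 (by simp [cons_mk_zero])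
    | (j+1) => exact H j (by omega) ⟨hc.1, hc.2.1, hc.2.2⟩

lemma av_cons_true {n : ℕ} (t : Fin (n+2) → Bool) :
    Av (n+3) (Fin.cons true t) ↔
      Av (n+2) t ∧ ¬(t ⟨0, Nat.succ_pos _⟩ = false ∧ t ⟨1, Nat.one_lt_succ_succ _⟩ = false) := by
  constructor
  · intro H
    refine ⟨fun i h hc => H (i+1) (by omega) ⟨hc.1, hc.2.1, hc.2.2⟩, fun hc => ?_⟩
    exact H 0 (by omega) ⟨cons_mk_zero _ _ _, hc.1, hc.2⟩
  · intro ⟨H, H0⟩ i h hc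
    match i with
    | 0 => exact H0 ⟨hc.2.1, hc.2.2⟩
    | (j+1) => exact H j (by omega) ⟨hc.1, hc.2.1, hc.2.2⟩

def consEquiv {n : ℕ} (c : Bool) (P : (Fin (n+1) → Bool) → Prop) :
    {s : Fin (n+1) → Bool // P s ∧ s ⟨0, Nat.succ_pos n⟩ = c} ≃
      {t : Fin n → Bool // P (Fin.cons c t)} where
  toFun s := ⟨Fin.tail s.1, by
    have h : Fin.cons c (Fin.tail s.1) = s.1 := by
      have h2 := Fin.cons_self_tail s.1; rw [show s.1 0 = c from s.2.2] at h2; exact h2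
    rw [h]; exact s.2.1⟩
  invFun t := ⟨Fin.cons c t.1, t.2, cons_mk_zero _ _ _⟩
  left_inv s := Subtype.ext (by
    show Fin.cons c (Fin.tail s.1) = s.1
    have h2 := Fin.cons_self_tail s.1; rw [show s.1 0 = c from s.2.2] at h2; exact h2)
  right_inv t := Subtype.ext (by simp)

lemma card_split {α : Type*} [Finite α] (p q : α → Prop) :
    Nat.card {x : α // p x ∧ q x} + Nat.card {x // p x ∧ ¬ q x} = Nat.card {x // p x} := by
  classical
  rw [← Nat.card_sum]
  exact Nat.card_congr
    ((Equiv.sumCongr (Equiv.subtypeSubtypeEquivSubtypeInter p q).symm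
      (Equiv.subtypeSubtypeEquivSubtypeInter p (fun x => ¬ q x)).symm).trans
      (Equiv.sumCompl _))

lemma card_false (n : ℕ) :
    Nat.card {s : Fin (n+1) → Bool // Av (n+1) s ∧ s ⟨0, Nat.succ_pos n⟩ = false} = a n := by
  rw [Nat.card_congr (consEquiv false (Av (n+1)))]
  exact Nat.card_congr (Equiv.subtypeEquivRight (fun t => av_cons_false t))

lemma card_QQ (n : ℕ) :
    Nat.card {t : Fin (n+2) → Bool //
      Av (n+2) t ∧ t ⟨0, Nat.succ_pos _⟩ = false ∧ t ⟨1, Nat.one_lt_succ_succ _⟩ = false}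
      = a n := by
  have e1 : {t : Fin (n+2) → Bool //
        Av (n+2) t ∧ t ⟨0, Nat.succ_pos _⟩ = false ∧ t ⟨1, Nat.one_lt_succ_succ _⟩ = false}
      ≃ {t : Fin (n+2) → Bool //
        (Av (n+2) t ∧ t ⟨1, Nat.one_lt_succ_succ _⟩ = false) ∧
          t ⟨0, Nat.succ_pos (n+1)⟩ = false} :=
    Equiv.subtypeEquivRight (fun t => by
      constructor
      · rintro ⟨h1, h2, h3⟩; exact ⟨⟨h1, h3⟩, h2⟩
      · rintro ⟨⟨h1, h3⟩, h2⟩; exact ⟨h1, h2, h3⟩)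
  rw [Nat.card_congr e1,
    Nat.card_congr (consEquiv false
      (fun t => Av (n+2) t ∧ t ⟨1, Nat.one_lt_succ_succ _⟩ = false))]
  have e2 : {t : Fin (n+1) → Bool //
        Av (n+2) (Fin.cons false t) ∧
          (Fin.cons false t : Fin (n+2) → Bool) ⟨1, Nat.one_lt_succ_succ _⟩ = false}
      ≃ {t : Fin (n+1) → Bool // Av (n+1) t ∧ t ⟨0, Nat.succ_pos n⟩ = false} :=
    Equiv.subtypeEquivRight (fun t => by
      rw [cons_mk_succ]
      exact and_congr_left (fun _ => av_cons_false t))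
  rw [Nat.card_congr e2, Nat.card_congr (consEquiv false (Av (n+1)))]
  exact Nat.card_congr (Equiv.subtypeEquivRight (fun t => av_cons_false t))

lemma card_true (n : ℕ) :
    Nat.card {s : Fin (n+3) → Bool // Av (n+3) s ∧ s ⟨0, Nat.succ_pos (n+2)⟩ = true}
      = Nat.card {t : Fin (n+2) → Bool //
        Av (n+2) t ∧
          ¬(t ⟨0, Nat.succ_pos _⟩ = false ∧ t ⟨1, Nat.one_lt_succ_succ _⟩ = false)} := by
  rw [Nat.card_congr (consEquiv true (Av (n+3)))]
  exact Nat.card_congr (Equiv.subtypeEquivRight (fun t => av_cons_true t))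

lemma a_rec (n : ℕ) : a (n+3) + a n = a (n+2) + a (n+2) := by
  have split1 := card_split (Av (n+3))
    (fun s : Fin (n+3) → Bool => s ⟨0, Nat.succ_pos (n+2)⟩ = false)
  have hne : Nat.card {s : Fin (n+3) → Bool //
      Av (n+3) s ∧ ¬ s ⟨0, Nat.succ_pos (n+2)⟩ = false}
      = Nat.card {s : Fin (n+3) → Bool // Av (n+3) s ∧ s ⟨0, Nat.succ_pos (n+2)⟩ = true} :=
    Nat.card_congr (Equiv.subtypeEquivRight (fun s => by simp))
  have split2 := card_split (Av (n+2))
    (fun t : Fin (n+2) → Bool =>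
      t ⟨0, Nat.succ_pos _⟩ = false ∧ t ⟨1, Nat.one_lt_succ_succ _⟩ = false)
  have h1 := card_false (n+2)
  have h2 := card_true n
  have h3 := card_QQ n
  unfold a at h1 h3 ⊢
  linarith [split1, hne, split2, h1, h2, h3]

lemma a_eq (n : ℕ) : a n = Nat.fib (n+3) - 1 := by
  induction n using Nat.strong_induction_on with
  | _ n ih =>
    match n with
    | 0 =>
      have e : {s : Fin 0 → Bool // Av 0 s} ≃ (Fin 0 → Bool) :=
        Equiv.subtypeUnivEquiv (fun s i h => by omega)
      simp [a, Nat.card_congr e, Nat.card_eq_fintype_card]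
      decide
    | 1 =>
      have e : {s : Fin 1 → Bool // Av 1 s} ≃ (Fin 1 → Bool) :=
        Equiv.subtypeUnivEquiv (fun s i h => by omega)
      simp [a, Nat.card_congr e, Nat.card_eq_fintype_card]
      decide
    | 2 =>
      have e : {s : Fin 2 → Bool // Av 2 s} ≃ (Fin 2 → Bool) :=
        Equiv.subtypeUnivEquiv (fun s i h => by omega)
      simp [a, Nat.card_congr e, Nat.card_eq_fintype_card]
      decide
    | (k+3) =>
      have h1 := ih (k+2) (by omega)
      have h2 := ih k (by omega)
      have hr := a_rec k
      rw [show k+2+3 = k+5 by omega] at h1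
      have f1 : Nat.fib (k+6) = Nat.fib (k+5) + Nat.fib (k+4) := by
        rw [show k+6 = (k+4)+2 by omega, show k+5 = (k+4)+1 by omega,
          Nat.fib_add_two, Nat.add_comm]
      have f2 : Nat.fib (k+5) = Nat.fib (k+4) + Nat.fib (k+3) := by
        rw [show k+5 = (k+3)+2 by omega, show k+4 = (k+3)+1 by omega,
          Nat.fib_add_two, Nat.add_comm]
      have f3 : 1 ≤ Nat.fib (k+3) := Nat.fib_pos.mpr (by omega)
      have f4 : 1 ≤ Nat.fib (k+5) := Nat.fib_pos.mpr (by omega)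
      rw [show k+3+3 = k+6 by omega]
      omega

def finalEquiv (n : ℕ) :
    {s : Fin (n+3) → Bool //
      s ⟨n, by omega⟩ = true ∧ s ⟨n+1, by omega⟩ = false ∧ s ⟨n+2, by omega⟩ = false ∧
      ∀ i : ℕ, ∀ h : i + 2 < n+3,
        s ⟨i, by omega⟩ = true → s ⟨i+1, by omega⟩ = false → s ⟨i+2, h⟩ = false → i = n}
    ≃ {t : Fin n → Bool // Av n t} where
  toFun s := ⟨fun i => s.1 ⟨i.1, by omega⟩, by
    rintro i h ⟨h1, h2, h3⟩
    have := s.2.2.2.2 i (by omega) h1 h2 h3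
    omega⟩
  invFun t := ⟨fun j => if h : j.1 < n then t.1 ⟨j.1, h⟩ else decide (j.1 = n), by
    refine ⟨?_, ?_, ?_, ?_⟩ <;> (try dsimp only)
    · rw [dif_neg (by omega)]; simp
    · rw [dif_neg (by omega)]; simp
    · rw [dif_neg (by omega)]; simp
    · intro i h h1 h2 h3
      by_cases c1 : i + 2 < n
      · exfalso
        rw [dif_pos (by have _ := h; omega : i < n)] at h1
        rw [dif_pos (by have _ := h; omega : i + 1 < n)] at h2
        rw [dif_pos c1] at h3
        exact t.2 i c1 ⟨h1, h2, h3⟩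
      by_cases c2 : i + 2 = n
      · exfalso
        rw [dif_neg (by omega)] at h3
        simp at h3
        omega
      by_cases c3 : i + 1 = n
      · exfalso
        rw [dif_neg (by omega)] at h2
        simp at h2
        omega
      by_cases c4 : i = n
      · exact c4
      · exfalso
        rw [dif_neg (by omega)] at h1
        simp at h1
        omega⟩
  left_inv s := Subtype.ext (by
    funext j
    dsimp only
    by_cases h : j.1 < n
    · rw [dif_pos h]
    · rw [dif_neg h]
      have hj : j.1 = n ∨ j.1 = n + 1 ∨ j.1 = n + 2 := by omega
      rcases hj with hj | hj | hj
      · have he : j = ⟨n, by omega⟩ := Fin.ext hj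
        rw [he, s.2.1]
        simp [hj]
      · have he : j = ⟨n+1, by omega⟩ := Fin.ext hj
        rw [he, s.2.2.1]
        simp [hj]
      · have he : j = ⟨n+2, by omega⟩ := Fin.ext hj
        rw [he, s.2.2.2.1]
        simp [hj])
  right_inv t := Subtype.ext (by
    funext i
    dsimp only
    rw [dif_pos i.2])

theorem helper (n : ℕ) :
    Nat.card {s : Fin (n+3) → Bool //
      s ⟨n, by omega⟩ = true ∧ s ⟨n+1, by omega⟩ = false ∧ s ⟨n+2, by omega⟩ = false ∧
      ∀ i : ℕ, ∀ h : i + 2 < n+3,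
        s ⟨i, by omega⟩ = true → s ⟨i+1, by omega⟩ = false → s ⟨i+2, h⟩ = false → i = n}
    = Nat.fib (n+3) - 1 := by
  rw [Nat.card_congr (finalEquiv n)]
  exact a_eq n

theorem count_end_100_only (m : ℕ) (hm : 3 ≤ m) :
    Nat.card {s : Fin m → Bool //
      s ⟨m - 3, by omega⟩ = true ∧ s ⟨m - 2, by omega⟩ = false ∧
      s ⟨m - 1, by omega⟩ = false ∧
      ∀ i : ℕ, ∀ h : i + 2 < m,
        s ⟨i, by omega⟩ = true → s ⟨i + 1, by omega⟩ = false → s ⟨i + 2, h⟩ = false →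
          i = m - 3} = Nat.fib m - 1 := by
  obtain ⟨n, rfl⟩ : ∃ n, m = n + 3 := ⟨m - 3, by omega⟩
  exact helper n
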